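/- Let A₁,…,A_n be diagonal r×r complex matrices, β a real diagonal matrix, μ_i the diagonal entries of A₁ and β_i of β. On the punctured unit disk consider the flat connection D = d + ∑_{i=1}^n A_i dz/z^i − β dr/r on the trivial bundle with hermitian metric making the frame (e_i) orthonormal, where e_i = |z|^{-Im μ_i} exp(∑_{j=2}^n (−A_j*/(2(j−1)z̄^{j−1}) + A_j/(2(j−1)z^{j−1}))) τ_i/|z|^{β_i}. Then in the frame (e_i): the unitary part is D⁺ = d + Re(A₁) i dθ, and the Higgs field of the associated Higgs pair is θ = (1/2)∑_{i=1}^n A_i dz/z^i − (β/2) dz/z, with ∂̄-operator ∂̄ − (1/2)Re(A₁) dz̄/z̄; in particular the pseudo-curvature G_D = −2(D'')² vanishes, so this is a solution of Hitchin's selfduality equations. -/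

import Mathlib

open Metric Complex

/-- Wirtinger derivative `∂f/∂z = (∂_x f − i ∂_y f)/2`. -/
noncomputable def wdz (f : ℂ → ℂ) (z : ℂ) : ℂ :=
  (fderiv ℝ f z 1 - Complex.I * fderiv ℝ f z Complex.I) / 2

/-- Wirtinger derivative `∂f/∂z̄ = (∂_x f + i ∂_y f)/2`. -/
noncomputable def wdzbar (f : ℂ → ℂ) (z : ℂ) : ℂ :=
  (fderiv ℝ f z 1 + Complex.I * fderiv ℝ f z Complex.I) / 2

lemma fderiv_eq_of_hasDerivAt' {f : ℂ → ℂ} {f' z : ℂ} (h : HasDerivAt f f' z) (v : ℂ) :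
    fderiv ℝ f z v = v * f' := by
  rw [(h.hasFDerivAt.restrictScalars ℝ).fderiv]
  simp

lemma wdzbar_of_hasDerivAt' {f : ℂ → ℂ} {f' z : ℂ} (h : HasDerivAt f f' z) :
    wdzbar f z = 0 := by
  simp only [wdzbar, fderiv_eq_of_hasDerivAt' h]
  linear_combination (f' / 2) * Complex.I_sq

lemma wdz_wdzbar_exp_mixed' {H K s : ℂ → ℂ} {H' K' z : ℂ}
    (hH : HasDerivAt H H' z) (hK : HasDerivAt K K' z)
    (hs : s =ᶠ[nhds z] fun w => Complex.exp (H w + (starRingEnd ℂ) (K w))) :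
    wdz s z = s z * H' ∧ wdzbar s z = s z * (starRingEnd ℂ) K' := by
  have e0 : s z = Complex.exp (H z + (starRingEnd ℂ) (K z)) := hs.eq_of_nhds
  set LH : ℂ →L[ℝ] ℂ := (ContinuousLinearMap.smulRight (1 : ℂ →L[ℂ] ℂ) H').restrictScalars ℝ with hLH
  set LK : ℂ →L[ℝ] ℂ := (ContinuousLinearMap.smulRight (1 : ℂ →L[ℂ] ℂ) K').restrictScalars ℝ with hLK
  have hg : HasFDerivAt (fun w => H w + (starRingEnd ℂ) (K w))
      (LH + Complex.conjCLE.toContinuousLinearMap.comp LK) z :=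
    (hH.hasFDerivAt.restrictScalars ℝ).add
      (Complex.conjCLE.toContinuousLinearMap.hasFDerivAt.comp z (hK.hasFDerivAt.restrictScalars ℝ))
  have hF : HasFDerivAt s
      (((ContinuousLinearMap.smulRight (1 : ℂ →L[ℂ] ℂ)
          (Complex.exp (H z + (starRingEnd ℂ) (K z)))).restrictScalars ℝ).comp
        (LH + Complex.conjCLE.toContinuousLinearMap.comp LK)) z :=
    (((Complex.hasDerivAt_exp _).hasFDerivAt.restrictScalars ℝ).comp z hg).congr_of_eventuallyEq hs
  rw [wdz, wdzbar, hF.fderiv, e0]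
  constructor
  · simp only [hLH, hLK, ContinuousLinearMap.coe_comp', Function.comp_apply,
      ContinuousLinearMap.add_apply, ContinuousLinearMap.coe_restrictScalars',
      ContinuousLinearMap.smulRight_apply, ContinuousLinearMap.one_apply, smul_eq_mul,
      ContinuousLinearEquiv.coe_coe, Complex.conjCLE_apply, map_mul, map_one, Complex.conj_I]
    linear_combination (Complex.exp (H z + (starRingEnd ℂ) (K z)) *
      ((starRingEnd ℂ) K' - H') / 2) * Complex.I_sq
  · simp only [hLH, hLK, ContinuousLinearMap.coe_comp', Function.comp_apply,
      ContinuousLinearMap.add_apply, ContinuousLinearMap.coe_restrictScalars',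
      ContinuousLinearMap.smulRight_apply, ContinuousLinearMap.one_apply, smul_eq_mul,
      ContinuousLinearEquiv.coe_coe, Complex.conjCLE_apply, map_mul, map_one, Complex.conj_I]
    linear_combination (Complex.exp (H z + (starRingEnd ℂ) (K z)) *
      (H' - (starRingEnd ℂ) K') / 2) * Complex.I_sq

/-- The local model (diagonal case, stated entrywise): in the unitary frame
`e = |z|^{-i·Im μ} exp(∑_{j≥2}(−ā_j/(2(j−1)z̄^{j-1}) + a_j/(2(j−1)z^{j-1}))) τ/|z|^β`,
the connection `D = d + ∑ a_i dz/z^i − β dr/r` has unitary part `d + Re(μ) i dθ`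
(dz-coefficient `Re μ/(2z)`, dz̄-coefficient `−Re μ/(2z̄)`), Higgs field
`θ = (1/2)∑ a_i dz/z^i − (β/2) dz/z`, and the pseudo-curvature vanishes
(`∂̄` of the Higgs coefficient is zero), so this solves Hitchin's equations. -/
theorem local_model_frame (n : ℕ) (hn : 1 ≤ n) (a : ℕ → ℂ) (β : ℝ) :
    ∀ z : ℂ, z ≠ 0 → ‖z‖ < 1 →
      (let μ : ℂ := a 1
       let s : ℂ → ℂ := fun w =>
         ((‖w‖ : ℂ) ^ (-(μ.im : ℂ) * Complex.I)) *
           Complex.exp (∑ j ∈ Finset.Icc 2 n,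
             (-(starRingEnd ℂ (a j)) / (2 * ((j : ℂ) - 1) * (starRingEnd ℂ w) ^ (j - 1))
               + a j / (2 * ((j : ℂ) - 1) * w ^ (j - 1)))) *
           ((‖w‖ : ℂ) ^ (-(β : ℂ)))
       -- dz- and dz̄-coefficients of the connection form in the frame e = s·τ
       let Q : ℂ := (∑ i ∈ Finset.Icc 1 n, a i / z ^ i) + wdz s z / s z
       let R : ℂ := wdzbar s z / s z
       -- unitary part D⁺ = d + Re(μ) i dθ
       ((Q - starRingEnd ℂ R) / 2 = (μ.re : ℂ) / (2 * z) ∧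
        (R - starRingEnd ℂ Q) / 2 = -(μ.re : ℂ) / (2 * starRingEnd ℂ z)) ∧
       -- Higgs field θ = (1/2) ∑ a_i dz/z^i − (β/2) dz/z
       (Q + starRingEnd ℂ R) / 2
          = (∑ i ∈ Finset.Icc 1 n, a i / z ^ i) / 2 - (β : ℂ) / (2 * z) ∧
       -- vanishing of the pseudo-curvature: ∂̄θ = 0
       wdzbar (fun w => (∑ i ∈ Finset.Icc 1 n, a i / w ^ i) / 2 - (β : ℂ) / (2 * w)) z
          = 0) := by
  intro z hz _hlt
  intro μ s Q R
  have hzc : (starRingEnd ℂ) z ≠ 0 := by simpa using hz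
  set c : ℂ := -(μ.im : ℂ) * Complex.I - (β : ℂ) with hc
  set Ah : ℂ → ℂ :=
    fun w => ∑ j ∈ Finset.Icc 2 n, -(a j) / (2 * ((j:ℂ) - 1)) * (w ^ (j-1))⁻¹ with hAh
  set P : ℂ := ∑ j ∈ Finset.Icc 2 n, a j / (2 * z ^ j) with hP
  -- derivative of Ah
  have hAhd : HasDerivAt Ah P z := by
    rw [hAh, hP]
    apply HasDerivAt.fun_sum
    intro j hj
    have hj2 : 2 ≤ j := (Finset.mem_Icc.mp hj).1
    obtain ⟨m, rfl⟩ : ∃ m, j = m + 2 := ⟨j - 2, by omega⟩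
    have h1 : HasDerivAt (fun w : ℂ => (w ^ (m + 2 - 1))⁻¹)
        (-(↑(m + 2 - 1) * z ^ (m + 2 - 1 - 1)) / (z ^ (m + 2 - 1)) ^ 2) z :=
      (hasDerivAt_pow (m + 2 - 1) z).inv (pow_ne_zero _ hz)
    have h2 := h1.const_mul (-(a (m + 2)) / (2 * (((m + 2 : ℕ) : ℂ) - 1)))
    refine h2.congr_deriv ?_
    rw [show m + 2 - 1 = m + 1 from by omega, show m + 1 - 1 = m from by omega]
    have hmc : ((m : ℂ) + 1) ≠ 0 := by exact_mod_cast Nat.succ_ne_zero m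
    push_cast
    have h2m : ((m:ℂ) + 2 - 1) ≠ 0 := by
      rw [show (m:ℂ) + 2 - 1 = (m:ℂ) + 1 by ring]; exact hmc
    field_simp
    ring
  -- s = exp of the "logarithm"
  have hsg : ∀ w : ℂ, w ≠ 0 →
      s w = Complex.exp (c * ((Real.log ‖w‖ : ℝ) : ℂ) + ((starRingEnd ℂ) (Ah w) - Ah w)) := by
    intro w hw
    have hnwc : ((‖w‖ : ℝ) : ℂ) ≠ 0 :=
      Complex.ofReal_ne_zero.mpr (norm_ne_zero_iff.mpr hw).symm.symm
    have hFeq : (∑ j ∈ Finset.Icc 2 n,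
        (-(starRingEnd ℂ (a j)) / (2 * ((j : ℂ) - 1) * (starRingEnd ℂ w) ^ (j - 1))
          + a j / (2 * ((j : ℂ) - 1) * w ^ (j - 1))))
        = (starRingEnd ℂ) (Ah w) - Ah w := by
      simp only [hAh, map_sum]
      rw [← Finset.sum_sub_distrib]
      refine Finset.sum_congr rfl fun j hj => ?_
      have hj2 : 2 ≤ j := (Finset.mem_Icc.mp hj).1
      have hj1 : ((j : ℂ) - 1) ≠ 0 := sub_ne_zero.mpr (by exact_mod_cast (by omega : j ≠ 1))
      have hwc : (starRingEnd ℂ) w ≠ 0 := by simpa using hw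
      simp only [map_mul, map_div₀, map_inv₀, map_pow, map_neg, map_sub, map_ofNat,
        map_natCast, map_one]
      field_simp
      ring
    simp only [s]
    rw [hFeq, Complex.cpow_def_of_ne_zero hnwc, Complex.cpow_def_of_ne_zero hnwc,
      ← Complex.ofReal_log (norm_nonneg w), ← Complex.exp_add, ← Complex.exp_add]
    congr 1
    rw [hc]
    ring
  have hs0 : s z ≠ 0 := by rw [hsg z hz]; exact Complex.exp_ne_zero _
  -- main computation, uniform in the choice of local holomorphic logarithm
  have main : ∀ L : ℂ → ℂ, HasDerivAt L z⁻¹ z →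
      (∀ w : ℂ, w ≠ 0 → L w + (starRingEnd ℂ) (L w) = 2 * ((Real.log ‖w‖ : ℝ) : ℂ)) →
      wdz s z = s z * (c / (2 * z) - P) ∧
        wdzbar s z = s z * (starRingEnd ℂ) ((starRingEnd ℂ) c / (2 * z) + P) := by
    intro L hL hLc
    have hH : HasDerivAt (fun w => c / 2 * L w - Ah w) (c / (2 * z) - P) z := by
      have h := (hL.const_mul (c / 2)).sub hAhd
      refine h.congr_deriv ?_
      ring
    have hK : HasDerivAt (fun w => (starRingEnd ℂ) c / 2 * L w + Ah w)
        ((starRingEnd ℂ) c / (2 * z) + P) z := by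
      have h := (hL.const_mul ((starRingEnd ℂ) c / 2)).add hAhd
      refine h.congr_deriv ?_
      ring
    refine wdz_wdzbar_exp_mixed' hH hK ?_
    filter_upwards [compl_singleton_mem_nhds hz] with w hw
    have hw0 : w ≠ 0 := hw
    rw [hsg w hw0]
    congr 1
    have hcw := hLc w hw0
    simp only [map_add, map_mul, map_div₀, Complex.conj_conj, map_ofNat]
    linear_combination (-(c / 2)) * hcw
  have key : wdz s z = s z * (c / (2 * z) - P) ∧
      wdzbar s z = s z * (starRingEnd ℂ) ((starRingEnd ℂ) c / (2 * z) + P) := by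
    by_cases hsl : z ∈ Complex.slitPlane
    · refine main Complex.log (Complex.hasDerivAt_log hsl) ?_
      intro w hw
      rw [Complex.add_conj, Complex.log_re]
      push_cast
      ring
    · have hre0 : z.re ≠ 0 := by
        intro h0
        apply hz
        apply Complex.ext h0
        simp only [Complex.mem_slitPlane_iff, not_or, not_lt, ne_eq, not_not] at hsl
        simpa using hsl.2
      simp only [Complex.mem_slitPlane_iff, not_or, not_lt, ne_eq, not_not] at hsl
      have hsl' : -z ∈ Complex.slitPlane := by
        rw [Complex.mem_slitPlane_iff]
        left
        simp only [Complex.neg_re]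
        have := lt_of_le_of_ne hsl.1 hre0
        linarith
      refine main (fun w => Complex.log (-w)) ?_ ?_
      · have h := (Complex.hasDerivAt_log hsl').comp z (hasDerivAt_neg z)
        simpa [Function.comp_def, inv_neg] using h
      · intro w hw
        rw [Complex.add_conj, Complex.log_re, norm_neg]
        push_cast
        ring
  obtain ⟨kw1, kw2⟩ := key
  have hQv : wdz s z / s z = c / (2 * z) - P := by
    rw [kw1, mul_div_cancel_left₀ _ hs0]
  have hRv : wdzbar s z / s z = c / (2 * (starRingEnd ℂ) z) + (starRingEnd ℂ) P := by
    rw [kw2, mul_div_cancel_left₀ _ hs0]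
    simp only [map_add, map_div₀, map_mul, map_ofNat, Complex.conj_conj]
  have hsum : (∑ i ∈ Finset.Icc 1 n, a i / z ^ i) = a 1 / z + 2 * P := by
    have h1 : Finset.Icc 1 n = insert 1 (Finset.Icc 2 n) := by
      ext x
      simp only [Finset.mem_Icc, Finset.mem_insert]
      omega
    rw [h1, Finset.sum_insert (by simp), pow_one, hP, Finset.mul_sum]
    congr 1
    refine Finset.sum_congr rfl fun j hj => ?_
    rw [mul_div_assoc', mul_div_mul_left _ _ (two_ne_zero)]
  have hc1 : c - (starRingEnd ℂ) c = (starRingEnd ℂ) (a 1) - a 1 := by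
    rw [hc]
    simp only [map_sub, map_mul, map_neg, Complex.conj_I, Complex.conj_ofReal]
    simp only [μ]
    have hsc := Complex.sub_conj (a 1)
    push_cast at hsc ⊢
    linear_combination hsc
  have hc2 : c + (starRingEnd ℂ) c = -2 * (β : ℂ) := by
    rw [hc]
    simp only [map_sub, map_mul, map_neg, Complex.conj_I, Complex.conj_ofReal]
    ring
  have hre : ((μ.re : ℝ) : ℂ) = (a 1 + (starRingEnd ℂ) (a 1)) / 2 := by
    simp only [μ]
    rw [eq_div_iff (two_ne_zero)]
    have hac := Complex.add_conj (a 1)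
    push_cast at hac ⊢
    linear_combination -hac
  refine ⟨⟨?_, ?_⟩, ?_, ?_⟩
  · simp only [Q, R, hQv, hRv, hsum, hre]
    simp only [map_add, map_div₀, map_mul, map_ofNat, Complex.conj_conj]
    linear_combination hc1 / (4 * z)
  · simp only [Q, R, hQv, hRv, hsum, hre]
    simp only [map_add, map_sub, map_div₀, map_mul, map_ofNat, Complex.conj_conj]
    linear_combination hc1 / (4 * (starRingEnd ℂ) z)
  · simp only [Q, R, hQv, hRv, hsum]
    simp only [map_add, map_div₀, map_mul, map_ofNat, Complex.conj_conj]
    linear_combination hc2 / (4 * z)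
  · exact wdzbar_of_hasDerivAt'
      (((HasDerivAt.fun_sum (fun i _ => (hasDerivAt_const z (a i)).div (hasDerivAt_pow i z)
          (pow_ne_zero i hz))).div_const 2).sub
        ((hasDerivAt_const z ((β : ℝ) : ℂ)).div ((hasDerivAt_id z).const_mul 2)
          (by simpa using hz)))
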